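/- arXiv:1208.6374 — 3 statements merged into one kernel-verified Lean document; each statement's English description precedes it below -/
import Mathlib

section
/- Let Ω ⊂ ℝ^N be an open set of finite Lebesgue measure, let u : Ω → [0,∞) be a nonnegative measurable function, and let 1 < p < ∞ with |||u|||_{M^p(Ω)} < ∞. Then ‖u‖_{L^1(Ω)} ≤ (p/(p−1)) · |||u|||_{M^1(Ω)} · [1 + log( (|||u|||_{M^p(Ω)} / |||u|||_{M^1(Ω)}) · 𝓛^N(Ω)^{1−1/p} )]. -/
open MeasureTheory Set Metric Filter Topology ENNReal
open scoped FourierTransform RealInnerProductSpace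

noncomputable section

/-- Euclidean space `ℝ^N`. -/
abbrev Euc (N : ℕ) : Type := EuclideanSpace ℝ (Fin N)

/-- The weak Lebesgue `M^p` pseudonorm
`|||u|||_{M^p(μ)} = (sup_{λ>0} λ^p μ{|u|>λ})^{1/p}`. -/
def MpNorm {α : Type*} [MeasurableSpace α] (μ : Measure α) (p : ℝ) (u : α → ℝ) : ℝ≥0∞ :=
  (⨆ (t : ℝ) (_ : 0 < t), ENNReal.ofReal t ^ p * μ {x | t < |u x|}) ^ (1 / p)

/-- The weak `M^1` pseudonorm, for `ℝ≥0∞`-valued functions. -/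
def M1NormE {α : Type*} [MeasurableSpace α] (μ : Measure α) (u : α → ℝ≥0∞) : ℝ≥0∞ :=
  ⨆ (t : ℝ) (_ : 0 < t), ENNReal.ofReal t * μ {x | ENNReal.ofReal t < u x}

theorem mp_interp {α : Type*} [MeasurableSpace α] (μ : Measure α) [IsFiniteMeasure μ]
    (u : α → ℝ) (hu : Measurable u) (hpos : ∀ x, 0 ≤ u x)
    (p : ℝ) (hp : 1 < p) (hMp : MpNorm μ p u < ⊤) :
    eLpNorm u 1 μ ≤
      ENNReal.ofReal ((p / (p - 1)) * (MpNorm μ 1 u).toReal *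
        (1 + Real.log ((MpNorm μ p u).toReal / (MpNorm μ 1 u).toReal *
            (μ Set.univ).toReal ^ (1 - 1 / p)))) := by
  have hp0 : (0:ℝ) < p := lt_trans one_pos hp
  have hp1 : p - 1 > 0 := by linarith
  have h1p : (0:ℝ) ≤ 1 - 1/p := by
    rw [sub_nonneg]; exact (div_le_one hp0).mpr hp.le
  have habs : ∀ t : ℝ, {x : α | t < |u x|} = {x | t < u x} := by
    intro t; ext x; simp [abs_of_nonneg (hpos x)]
  -- basic objects
  set A := MpNorm μ 1 u with hA
  set B := MpNorm μ p u with hB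
  set V := μ Set.univ with hV
  have hVfin : V ≠ ⊤ := (measure_lt_top μ _).ne
  have hAdef : A = ⨆ (t : ℝ) (_ : 0 < t), ENNReal.ofReal t * μ {x | t < u x} := by
    rw [hA, MpNorm]; simp_rw [habs]; simp [ENNReal.rpow_one]
  set S : ℝ≥0∞ := ⨆ (t : ℝ) (_ : 0 < t), ENNReal.ofReal t ^ p * μ {x | t < u x} with hS
  have hBdef : B = S ^ (1/p) := by
    rw [hB, MpNorm, hS]; simp_rw [habs]
  have hSB : S = B ^ p := by
    rw [hBdef, ← ENNReal.rpow_mul, one_div, inv_mul_cancel₀ hp0.ne', ENNReal.rpow_one]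
  have hSfin : S ≠ ⊤ := by
    rw [hSB]; exact (ENNReal.rpow_lt_top_of_nonneg hp0.le hMp.ne).ne
  have hF1 : ∀ t : ℝ, 0 < t → ENNReal.ofReal t * μ {x | t < u x} ≤ A := by
    intro t ht; rw [hAdef]
    exact le_iSup₂ (f := fun (t:ℝ) (_ : 0 < t) => ENNReal.ofReal t * μ {x | t < u x}) t ht
  have hF2 : ∀ t : ℝ, 0 < t → ENNReal.ofReal t ^ p * μ {x | t < u x} ≤ S := by
    intro t ht
    exact le_iSup₂ (f := fun (t:ℝ) (_ : 0 < t) => ENNReal.ofReal t ^ p * μ {x | t < u x}) t ht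
  -- interpolation bound A ≤ B * V^(1-1/p)
  have hinterp : A ≤ B * V ^ (1 - 1/p) := by
    rw [hAdef]
    apply iSup₂_le
    intro t ht
    have e1 : (ENNReal.ofReal t ^ p) ^ (1/p) = ENNReal.ofReal t := by
      rw [← ENNReal.rpow_mul, mul_one_div, div_self hp0.ne', ENNReal.rpow_one]
    have e2 : μ {x | t < u x} = μ {x | t < u x} ^ (1/p) * μ {x | t < u x} ^ (1 - 1/p) := by
      rw [← ENNReal.rpow_add_of_nonneg _ _ (by positivity) h1p]
      norm_num
    calc ENNReal.ofReal t * μ {x | t < u x}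
        = (ENNReal.ofReal t ^ p * μ {x | t < u x}) ^ (1/p) * μ {x | t < u x} ^ (1 - 1/p) := by
          rw [ENNReal.mul_rpow_of_nonneg _ _ (by positivity), e1]
          conv_lhs => rw [e2]
          ring
      _ ≤ S ^ (1/p) * V ^ (1 - 1/p) := by
          gcongr
          · exact hF2 t ht
          · exact measure_mono (subset_univ _)
      _ = B * V ^ (1 - 1/p) := by rw [hBdef]
  have hBVfin : B * V ^ (1 - 1/p) ≠ ⊤ :=
    ENNReal.mul_ne_top hMp.ne (ENNReal.rpow_lt_top_of_nonneg h1p hVfin).ne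
  have hAfin : A ≠ ⊤ := fun h => hBVfin (top_le_iff.mp (h ▸ hinterp))
  -- layer cake
  have hlayer : eLpNorm u 1 μ = ∫⁻ t in Ioi (0:ℝ), μ {a | t < u a} := by
    rw [eLpNorm_one_eq_lintegral_enorm,
        lintegral_congr fun x => Real.enorm_eq_ofReal (hpos x),
        lintegral_eq_lintegral_meas_lt μ (ae_of_all _ hpos) hu.aemeasurable]
  -- degenerate case A = 0
  by_cases hA0 : A = 0
  · have hmeas0 : ∀ t : ℝ, 0 < t → μ {x | t < u x} = 0 := by
      intro t ht
      have h := hF1 t ht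
      rw [hA0, nonpos_iff_eq_zero, mul_eq_zero] at h
      rcases h with h | h
      · exact absurd h (by simp [ht])
      · exact h
    have h0 : eLpNorm u 1 μ = 0 := by
      rw [hlayer]
      apply le_antisymm _ (zero_le)
      calc ∫⁻ t in Ioi (0:ℝ), μ {a | t < u a}
          ≤ ∫⁻ _ in Ioi (0:ℝ), (0:ℝ≥0∞) :=
            setLIntegral_mono measurable_const fun t ht => le_of_eq (hmeas0 t ht)
        _ = 0 := by simp
    rw [h0]; exact zero_le
  -- main case
  have hV0 : V ≠ 0 := by
    intro h
    have hμ : μ = 0 := Measure.measure_univ_eq_zero.mp h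
    apply hA0
    refine le_antisymm ?_ (zero_le)
    rw [hAdef]
    exact iSup₂_le fun t ht => by simp [hμ]
  have hB0 : B ≠ 0 := by
    intro h
    apply hA0
    refine le_antisymm ?_ (zero_le)
    calc A ≤ B * V ^ (1 - 1/p) := hinterp
      _ = 0 := by rw [h, zero_mul]
  -- real quantities
  set a := A.toReal with ha_def
  set b := B.toReal with hb_def
  set v := V.toReal with hv_def
  have ha : 0 < a := ENNReal.toReal_pos hA0 hAfin
  have hb : 0 < b := ENNReal.toReal_pos hB0 hMp.ne
  have hv : 0 < v := ENNReal.toReal_pos hV0 hVfin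
  have hAor : A = ENNReal.ofReal a := (ENNReal.ofReal_toReal hAfin).symm
  have hBor : B = ENNReal.ofReal b := (ENNReal.ofReal_toReal hMp.ne).symm
  have hVor : V = ENNReal.ofReal v := (ENNReal.ofReal_toReal hVfin).symm
  have hSor : S = ENNReal.ofReal (b ^ p) := by
    rw [hSB, hBor, ENNReal.ofReal_rpow_of_pos hb]
  set t0 : ℝ := a / v with ht0def
  set t1 : ℝ := (b ^ p / a) ^ (1/(p-1)) with ht1def
  have ht0 : 0 < t0 := by positivity
  have ht1 : 0 < t1 := by positivity
  -- a ≤ b * v^(1-1/p)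
  have hav : a ≤ b * v ^ (1 - 1/p) := by
    have := ENNReal.toReal_mono hBVfin hinterp
    rwa [ENNReal.toReal_mul, ← ENNReal.toReal_rpow] at this
  have hkey : a ^ p ≤ b ^ p * v ^ (p - 1) := by
    have h := Real.rpow_le_rpow ha.le hav hp0.le
    rwa [Real.mul_rpow hb.le (by positivity), ← Real.rpow_mul hv.le,
      show (1 - 1/p) * p = p - 1 by field_simp] at h
  have ht1pow : t1 ^ (p - 1) = b ^ p / a := by
    rw [ht1def, ← Real.rpow_mul (by positivity), one_div_mul_cancel hp1.ne', Real.rpow_one]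
  have ht1pow' : t1 ^ (1 - p) = a / b ^ p := by
    rw [ht1def, ← Real.rpow_mul (by positivity),
      show (1/(p-1)) * (1-p) = -1 by field_simp; ring, Real.rpow_neg_one, inv_div]
  have ht01 : t0 ≤ t1 := by
    by_contra hcon
    push_neg at hcon
    have h1 : t1 ^ (p-1) < t0 ^ (p-1) := Real.rpow_lt_rpow ht1.le hcon hp1
    rw [ht1pow, ht0def, Real.div_rpow ha.le hv.le] at h1
    have h2 : a ^ (p-1) * a ≤ b ^ p * v ^ (p-1) := by
      rw [← Real.rpow_add_one ha.ne' (p-1), sub_add_cancel]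
      exact hkey
    rw [div_lt_div_iff₀ (by positivity) (by positivity)] at h1
    nlinarith [Real.rpow_pos_of_pos ha (p-1), Real.rpow_pos_of_pos hv (p-1)]
  -- split the integral
  have hsplit : ∫⁻ t in Ioi (0:ℝ), μ {x | t < u x} ≤
      (∫⁻ t in Ioc (0:ℝ) t0, μ {x | t < u x}) + (∫⁻ t in Ioc t0 t1, μ {x | t < u x})
        + ∫⁻ t in Ioi t1, μ {x | t < u x} := by
    have hsub : Ioi (0:ℝ) ⊆ (Ioc 0 t0 ∪ Ioc t0 t1) ∪ Ioi t1 := by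
      intro x hx
      rcases le_or_gt x t0 with h | h
      · exact Or.inl (Or.inl ⟨hx, h⟩)
      · rcases le_or_gt x t1 with h' | h'
        · exact Or.inl (Or.inr ⟨h, h'⟩)
        · exact Or.inr h'
    calc ∫⁻ t in Ioi (0:ℝ), μ {x | t < u x}
        ≤ ∫⁻ t in (Ioc 0 t0 ∪ Ioc t0 t1) ∪ Ioi t1, μ {x | t < u x} :=
          lintegral_mono_set hsub
      _ ≤ (∫⁻ t in Ioc (0:ℝ) t0 ∪ Ioc t0 t1, μ {x | t < u x})
            + ∫⁻ t in Ioi t1, μ {x | t < u x} := lintegral_union_le _ _ _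
      _ ≤ _ := add_le_add_left (lintegral_union_le _ _ _) _
  -- piece 1
  have hP1 : ∫⁻ t in Ioc (0:ℝ) t0, μ {x | t < u x} ≤ ENNReal.ofReal a := by
    calc ∫⁻ t in Ioc (0:ℝ) t0, μ {x | t < u x}
        ≤ ∫⁻ _ in Ioc (0:ℝ) t0, V :=
          setLIntegral_mono measurable_const fun t _ => measure_mono (subset_univ _)
      _ = V * volume (Ioc (0:ℝ) t0) := setLIntegral_const _ _
      _ = ENNReal.ofReal a := by
          rw [Real.volume_Ioc, sub_zero, hVor, ← ENNReal.ofReal_mul hv.le, ht0def,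
            mul_div_cancel₀ _ hv.ne']
  -- piece 2
  have hmble2 : Measurable fun t : ℝ => ENNReal.ofReal (1/t) :=
    ENNReal.measurable_ofReal.comp (measurable_const.div measurable_id)
  have hP2 : ∫⁻ t in Ioc t0 t1, μ {x | t < u x}
      ≤ ENNReal.ofReal (a * (Real.log t1 - Real.log t0)) := by
    have hbd : ∀ t ∈ Ioc t0 t1, μ {x | t < u x} ≤ ENNReal.ofReal a * ENNReal.ofReal (1/t) := by
      intro t ht
      have htpos : 0 < t := lt_trans ht0 ht.1
      have h := hF1 t htpos
      rw [mul_comm] at h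
      have h2 : μ {x | t < u x} ≤ A / ENNReal.ofReal t :=
        (ENNReal.le_div_iff_mul_le (Or.inl (by simp [htpos])) (Or.inl ENNReal.ofReal_ne_top)).mpr h
      calc μ {x | t < u x} ≤ A / ENNReal.ofReal t := h2
        _ = ENNReal.ofReal a * ENNReal.ofReal (1/t) := by
            rw [hAor, div_eq_mul_inv, one_div, ENNReal.ofReal_inv_of_pos htpos]
    have hint : IntegrableOn (fun t : ℝ => 1/t) (Ioc t0 t1) := by
      apply (ContinuousOn.integrableOn_Icc ?_).mono_set Ioc_subset_Icc_self
      exact continuousOn_const.div continuousOn_id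
        (fun x hx => ne_of_gt (lt_of_lt_of_le ht0 hx.1))
    have hnn : 0 ≤ᵐ[volume.restrict (Ioc t0 t1)] fun t : ℝ => 1/t := by
      refine (ae_restrict_iff' measurableSet_Ioc).mpr (ae_of_all _ fun t ht => ?_)
      have : 0 < t := lt_trans ht0 ht.1
      positivity
    calc ∫⁻ t in Ioc t0 t1, μ {x | t < u x}
        ≤ ∫⁻ t in Ioc t0 t1, ENNReal.ofReal a * ENNReal.ofReal (1/t) :=
          setLIntegral_mono (measurable_const.mul hmble2) hbd
      _ = ENNReal.ofReal a * ∫⁻ t in Ioc t0 t1, ENNReal.ofReal (1/t) :=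
          lintegral_const_mul _ hmble2
      _ = ENNReal.ofReal a * ENNReal.ofReal (Real.log t1 - Real.log t0) := by
          congr 1
          rw [← ofReal_integral_eq_lintegral_ofReal hint hnn]
          congr 1
          rw [← intervalIntegral.integral_of_le ht01, integral_one_div ?_,
            Real.log_div (by positivity) (by positivity)]
          rw [Set.uIcc_of_le ht01]
          exact fun h => absurd h.1 (not_le.mpr ht0)
      _ = ENNReal.ofReal (a * (Real.log t1 - Real.log t0)) :=
          (ENNReal.ofReal_mul ha.le).symm
  -- piece 3
  have hmble3 : Measurable fun t : ℝ => ENNReal.ofReal (t ^ (-p)) :=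
    ENNReal.measurable_ofReal.comp (measurable_id.pow_const (-p))
  have hP3 : ∫⁻ t in Ioi t1, μ {x | t < u x} ≤ ENNReal.ofReal (a / (p-1)) := by
    have hbd : ∀ t ∈ Ioi t1, μ {x | t < u x}
        ≤ ENNReal.ofReal (b ^ p) * ENNReal.ofReal (t ^ (-p)) := by
      intro t ht
      have htpos : 0 < t := lt_trans ht1 ht
      have h := hF2 t htpos
      rw [mul_comm] at h
      have hne0 : ENNReal.ofReal t ^ p ≠ 0 := by
        simp [ENNReal.rpow_eq_zero_iff, htpos, ENNReal.ofReal_eq_zero, not_le, hp0,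
          asymm]
      have hnet : ENNReal.ofReal t ^ p ≠ ⊤ := by
        exact (ENNReal.rpow_lt_top_of_nonneg hp0.le ENNReal.ofReal_ne_top).ne
      have h2 : μ {x | t < u x} ≤ S / ENNReal.ofReal t ^ p :=
        (ENNReal.le_div_iff_mul_le (Or.inl hne0) (Or.inl hnet)).mpr h
      calc μ {x | t < u x} ≤ S / ENNReal.ofReal t ^ p := h2
        _ = ENNReal.ofReal (b ^ p) * ENNReal.ofReal (t ^ (-p)) := by
            rw [hSor, div_eq_mul_inv, ← ENNReal.rpow_neg,
              ENNReal.ofReal_rpow_of_pos htpos]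
    have hneg : -p < -1 := by linarith
    have hint : IntegrableOn (fun t : ℝ => t ^ (-p)) (Ioi t1) :=
      integrableOn_Ioi_rpow_of_lt hneg ht1
    have hnn : 0 ≤ᵐ[volume.restrict (Ioi t1)] fun t : ℝ => t ^ (-p) := by
      refine (ae_restrict_iff' measurableSet_Ioi).mpr (ae_of_all _ fun t ht => ?_)
      have : 0 < t := lt_trans ht1 ht
      positivity
    calc ∫⁻ t in Ioi t1, μ {x | t < u x}
        ≤ ∫⁻ t in Ioi t1, ENNReal.ofReal (b ^ p) * ENNReal.ofReal (t ^ (-p)) :=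
          setLIntegral_mono (measurable_const.mul hmble3) hbd
      _ = ENNReal.ofReal (b ^ p) * ∫⁻ t in Ioi t1, ENNReal.ofReal (t ^ (-p)) :=
          lintegral_const_mul _ hmble3
      _ = ENNReal.ofReal (b ^ p) * ENNReal.ofReal (t1 ^ (1 - p) / (p - 1)) := by
          congr 1
          rw [← ofReal_integral_eq_lintegral_ofReal hint hnn,
            integral_Ioi_rpow_of_lt hneg ht1]
          congr 1
          rw [show -p + 1 = 1 - p by ring, show (1:ℝ) - p = -(p-1) by ring]
          rw [neg_div_neg_eq]
      _ = ENNReal.ofReal (a / (p-1)) := by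
          rw [← ENNReal.ofReal_mul (by positivity), ht1pow']
          congr 1
          field_simp
  -- assemble
  have hlognn : 0 ≤ Real.log t1 - Real.log t0 :=
    sub_nonneg.mpr (Real.log_le_log ht0 ht01)
  have hlog : Real.log t1 - Real.log t0 = (p/(p-1)) * Real.log (b/a * v ^ (1 - 1/p)) := by
    rw [Real.log_mul (by positivity) (by positivity), Real.log_div hb.ne' ha.ne',
      Real.log_rpow hv, ht1def, Real.log_rpow (by positivity),
      Real.log_div (by positivity) ha.ne', Real.log_rpow hb, ht0def,
      Real.log_div ha.ne' hv.ne']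
    field_simp
    ring
  calc eLpNorm u 1 μ = ∫⁻ t in Ioi (0:ℝ), μ {x | t < u x} := hlayer
    _ ≤ (∫⁻ t in Ioc (0:ℝ) t0, μ {x | t < u x}) + (∫⁻ t in Ioc t0 t1, μ {x | t < u x})
        + ∫⁻ t in Ioi t1, μ {x | t < u x} := hsplit
    _ ≤ ENNReal.ofReal a + ENNReal.ofReal (a * (Real.log t1 - Real.log t0))
        + ENNReal.ofReal (a / (p-1)) := add_le_add (add_le_add hP1 hP2) hP3
    _ = ENNReal.ofReal (a + a * (Real.log t1 - Real.log t0) + a / (p-1)) := by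
        rw [← ENNReal.ofReal_add ha.le (by positivity),
          ← ENNReal.ofReal_add (by positivity) (by positivity)]
    _ = ENNReal.ofReal ((p / (p - 1)) * a * (1 + Real.log (b/a * v ^ (1 - 1/p)))) := by
        congr 1
        rw [hlog]
        field_simp
        ring

/-- Interpolation between `M^1` and `M^p`, `1 < p < ∞`:
if `Ω ⊆ ℝ^N` is open with finite measure and `u : Ω → [0,∞)` is measurable with
`|||u|||_{M^p(Ω)} < ∞`, then
`‖u‖_{L^1(Ω)} ≤ (p/(p-1)) |||u|||_{M^1(Ω)} [1 + log(|||u|||_{M^p(Ω)}/|||u|||_{M^1(Ω)} · 𝓛(Ω)^{1-1/p})]`. -/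
theorem statement0 {N : ℕ} (Ω : Set (Euc N)) (hΩopen : IsOpen Ω) (hΩfin : volume Ω < ⊤)
    (u : Euc N → ℝ) (hu : Measurable u) (hpos : ∀ x, 0 ≤ u x)
    (p : ℝ) (hp : 1 < p) (hMp : MpNorm (volume.restrict Ω) p u < ⊤) :
    eLpNorm u 1 (volume.restrict Ω) ≤
      ENNReal.ofReal ((p / (p - 1)) * (MpNorm (volume.restrict Ω) 1 u).toReal *
        (1 + Real.log ((MpNorm (volume.restrict Ω) p u).toReal /
              (MpNorm (volume.restrict Ω) 1 u).toReal *
            (volume Ω).toReal ^ (1 - 1 / p)))) := by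
  have hfin : IsFiniteMeasure (volume.restrict Ω) :=
    ⟨by rwa [Measure.restrict_apply_univ]⟩
  have h := mp_interp (volume.restrict Ω) u hu hpos p hp hMp
  rwa [Measure.restrict_apply_univ] at h
end
end

section
/- Let Ω ⊂ ℝ^N be an open set of finite Lebesgue measure and let u : Ω → [0,∞) be a nonnegative measurable function with u ∈ L^∞(Ω). Then ‖u‖_{L^1(Ω)} ≤ |||u|||_{M^1(Ω)} · [1 + log( (‖u‖_{L^∞(Ω)} / |||u|||_{M^1(Ω)}) · 𝓛^N(Ω) )]. -/
open MeasureTheory Set Metric Filter Topology ENNReal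
open scoped FourierTransform RealInnerProductSpace

noncomputable section

/-- Interpolation between `M^1` and `L^∞`:
if `Ω ⊆ ℝ^N` is open with finite measure and `u : Ω → [0,∞)` is measurable and
essentially bounded, then
`‖u‖_{L^1(Ω)} ≤ |||u|||_{M^1(Ω)} [1 + log(‖u‖_{L^∞(Ω)}/|||u|||_{M^1(Ω)} · 𝓛(Ω))]`. -/
theorem statement1 {N : ℕ} (Ω : Set (Euc N)) (hΩopen : IsOpen Ω) (hΩfin : volume Ω < ⊤)
    (u : Euc N → ℝ) (hu : Measurable u) (hpos : ∀ x, 0 ≤ u x)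
    (hbdd : MemLp u ⊤ (volume.restrict Ω)) :
    eLpNorm u 1 (volume.restrict Ω) ≤
      ENNReal.ofReal ((MpNorm (volume.restrict Ω) 1 u).toReal *
        (1 + Real.log ((eLpNorm u ⊤ (volume.restrict Ω)).toReal /
              (MpNorm (volume.restrict Ω) 1 u).toReal *
            (volume Ω).toReal))) := by
  set μ := volume.restrict Ω with hμdef
  set S := ⨆ (t : ℝ) (_ : 0 < t), ENNReal.ofReal t * μ {x | t < u x} with hSdef
  have habs : ∀ t : ℝ, {x | t < |u x|} = {x | t < u x} := by
    intro t; ext x; simp [abs_of_nonneg (hpos x)]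
  have hMeq : MpNorm μ 1 u = S := by
    simp only [MpNorm, hSdef, habs]
    norm_num [ENNReal.rpow_one]
  have hterm : ∀ t : ℝ, 0 < t → ENNReal.ofReal t * μ {x | t < u x} ≤ S := by
    intro t ht
    exact le_iSup₂ (f := fun (t : ℝ) (_ : 0 < t) => ENNReal.ofReal t * μ {x | t < u x}) t ht
  set L := eLpNorm u ⊤ μ with hLdef
  have hLtop : L ≠ ⊤ := hbdd.2.ne
  have hae : ∀ᵐ x ∂μ, ENNReal.ofReal (u x) ≤ L := by
    have h := ae_le_eLpNormEssSup (f := u) (μ := μ)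
    filter_upwards [h] with x hx
    rw [hLdef, eLpNorm_exponent_top]
    rwa [← ofReal_norm_eq_enorm, Real.norm_of_nonneg (hpos x)] at hx
  have haenull : μ {x | ¬ ENNReal.ofReal (u x) ≤ L} = 0 := ae_iff.mp hae
  have hμuniv : μ Set.univ = volume Ω := by rw [hμdef, Measure.restrict_apply_univ]
  have hSle : S ≤ L * volume Ω := by
    refine iSup₂_le fun t ht => ?_
    by_cases hc : ENNReal.ofReal t ≤ L
    · calc ENNReal.ofReal t * μ {x | t < u x} ≤ L * μ Set.univ :=
        mul_le_mul' hc (measure_mono (Set.subset_univ _))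
      _ = L * volume Ω := by rw [hμuniv]
    · push_neg at hc
      have h0 : μ {x | t < u x} = 0 := by
        refine measure_mono_null ?_ haenull
        intro x hx
        simp only [Set.mem_setOf_eq, not_le]
        exact hc.trans_le (ENNReal.ofReal_le_ofReal (le_of_lt hx))
      simp [h0]
  have hSfin : S ≠ ⊤ :=
    (hSle.trans_lt (ENNReal.mul_lt_top hbdd.2 hΩfin)).ne
  -- Layer cake formula
  have hL1 : eLpNorm u 1 μ = ∫⁻ t in Set.Ioi (0 : ℝ), μ {x | t < u x} := by
    rw [eLpNorm_one_eq_lintegral_enorm,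
      ← lintegral_eq_lintegral_meas_lt μ (Filter.Eventually.of_forall hpos) hu.aemeasurable]
    congr 1; ext x
    rw [← ofReal_norm_eq_enorm, Real.norm_of_nonneg (hpos x)]
  rcases eq_or_ne S 0 with hS0 | hS0
  · -- degenerate case: u = 0 a.e.
    have hz : ∀ t ∈ Set.Ioi (0 : ℝ), μ {x | t < u x} = 0 := by
      intro t ht
      have h := hterm t ht
      rw [hS0] at h
      have h' : ENNReal.ofReal t * μ {x | t < u x} = 0 := le_antisymm h zero_le
      rcases mul_eq_zero.mp h' with h'' | h''
      · exact absurd h'' (by simpa using ht)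
      · exact h''
    have : eLpNorm u 1 μ = 0 := by
      rw [hL1]
      rw [setLIntegral_congr_fun measurableSet_Ioi hz]
      simp
    rw [this]; exact zero_le
  -- main case
  set Mr := S.toReal with hMrdef
  set Lr := L.toReal with hLrdef
  set V := (volume Ω).toReal with hVdef
  have hMrpos : 0 < Mr := ENNReal.toReal_pos hS0 hSfin
  have hΩne : volume Ω ≠ 0 := by
    intro h; apply hS0
    refine le_antisymm ?_ zero_le
    calc S ≤ L * volume Ω := hSle
    _ = 0 := by rw [h, mul_zero]
  have hVpos : 0 < V := ENNReal.toReal_pos hΩne hΩfin.ne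
  have hLne : L ≠ 0 := by
    intro h; apply hS0
    refine le_antisymm ?_ zero_le
    calc S ≤ L * volume Ω := hSle
    _ = 0 := by rw [h, zero_mul]
  have hLrpos : 0 < Lr := ENNReal.toReal_pos hLne hLtop
  have hMrle : Mr ≤ Lr * V := by
    have := ENNReal.toReal_mono (ENNReal.mul_ne_top hLtop hΩfin.ne) hSle
    rwa [ENNReal.toReal_mul] at this
  set a := Mr / V with hadef
  have ha : 0 < a := div_pos hMrpos hVpos
  have haL : a ≤ Lr := (div_le_iff₀ hVpos).mpr hMrle
  have hSofReal : S = ENNReal.ofReal Mr := (ENNReal.ofReal_toReal hSfin).symm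
  have hμbound : ∀ t : ℝ, 0 < t → μ {x | t < u x} ≤ ENNReal.ofReal (Mr / t) := by
    intro t ht
    have h := hterm t ht
    rw [hSofReal] at h
    rw [ENNReal.ofReal_div_of_pos ht]
    rw [ENNReal.le_div_iff_mul_le (Or.inl (ENNReal.ofReal_pos.mpr ht).ne')
      (Or.inl ENNReal.ofReal_ne_top)]
    rwa [mul_comm]
  -- terms
  have hzero : ∀ t ∈ Set.Ioi Lr, μ {x | t < u x} = 0 := by
    intro t ht
    refine measure_mono_null ?_ haenull
    intro x hx
    simp only [Set.mem_setOf_eq, not_le]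
    calc L = ENNReal.ofReal Lr := (ENNReal.ofReal_toReal hLtop).symm
    _ < ENNReal.ofReal (u x) := by
        rw [ENNReal.ofReal_lt_ofReal_iff (lt_trans (hLrpos.trans ht) hx)]
        exact lt_trans ht hx
  have hterm3 : ∫⁻ t in Set.Ioi Lr, μ {x | t < u x} = 0 := by
    rw [setLIntegral_congr_fun measurableSet_Ioi hzero]
    simp
  have hterm1 : ∫⁻ t in Set.Ioc 0 a, μ {x | t < u x} ≤ ENNReal.ofReal Mr := by
    calc ∫⁻ t in Set.Ioc 0 a, μ {x | t < u x}
        ≤ ∫⁻ _ in Set.Ioc (0 : ℝ) a, volume Ω :=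
          setLIntegral_mono measurable_const fun t _ => by
            rw [← hμuniv]; exact measure_mono (Set.subset_univ _)
    _ = volume Ω * ENNReal.ofReal a := by rw [setLIntegral_const, Real.volume_Ioc, sub_zero]
    _ = ENNReal.ofReal V * ENNReal.ofReal a := by rw [hVdef, ENNReal.ofReal_toReal hΩfin.ne]
    _ = ENNReal.ofReal (V * a) := (ENNReal.ofReal_mul hVpos.le).symm
    _ = ENNReal.ofReal Mr := by rw [hadef, mul_div_cancel₀ _ hVpos.ne']
  have hint : IntegrableOn (fun t : ℝ => Mr / t) (Set.Ioc a Lr) := by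
    have hIcc : IntegrableOn (fun t : ℝ => Mr / t) (Set.Icc a Lr) := by
      apply ContinuousOn.integrableOn_compact isCompact_Icc
      exact continuousOn_const.div continuousOn_id fun x hx => (ha.trans_le hx.1).ne'
    exact hIcc.mono_set Set.Ioc_subset_Icc_self
  have hterm2 : ∫⁻ t in Set.Ioc a Lr, μ {x | t < u x}
      ≤ ENNReal.ofReal (Mr * Real.log (Lr / a)) := by
    calc ∫⁻ t in Set.Ioc a Lr, μ {x | t < u x}
        ≤ ∫⁻ t in Set.Ioc a Lr, ENNReal.ofReal (Mr / t) :=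
          setLIntegral_mono (Measurable.ennreal_ofReal (measurable_const.div measurable_id))
            fun t htI => hμbound t (ha.trans htI.1)
    _ = ENNReal.ofReal (∫ t in Set.Ioc a Lr, Mr / t) := by
        rw [ofReal_integral_eq_lintegral_ofReal hint]
        filter_upwards [ae_restrict_mem measurableSet_Ioc] with t htI
        exact div_nonneg hMrpos.le (ha.trans htI.1).le
    _ = ENNReal.ofReal (Mr * Real.log (Lr / a)) := by
        congr 1
        rw [← intervalIntegral.integral_of_le haL]
        simp_rw [div_eq_mul_inv]
        rw [intervalIntegral.integral_const_mul, integral_inv_of_pos ha (ha.trans_le haL),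
          div_eq_mul_inv Lr a]
  -- assemble
  rw [hL1, hMeq]
  have hsplit : ∫⁻ t in Set.Ioi (0 : ℝ), μ {x | t < u x}
      = (∫⁻ t in Set.Ioc 0 a, μ {x | t < u x}) + (∫⁻ t in Set.Ioc a Lr, μ {x | t < u x})
        + ∫⁻ t in Set.Ioi Lr, μ {x | t < u x} := by
    rw [← Set.Ioc_union_Ioi_eq_Ioi ha.le, lintegral_union measurableSet_Ioi Ioc_disjoint_Ioi_same,
      ← Set.Ioc_union_Ioi_eq_Ioi haL, lintegral_union measurableSet_Ioi Ioc_disjoint_Ioi_same,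
      add_assoc]
  have hlog : Real.log (Lr / a) = Real.log (Lr / Mr * V) := by
    congr 1
    rw [hadef]
    field_simp
  have hlognn : 0 ≤ Mr * Real.log (Lr / a) :=
    mul_nonneg hMrpos.le (Real.log_nonneg ((one_le_div ha).mpr haL))
  rw [hsplit]
  calc (∫⁻ t in Set.Ioc 0 a, μ {x | t < u x}) + (∫⁻ t in Set.Ioc a Lr, μ {x | t < u x})
        + ∫⁻ t in Set.Ioi Lr, μ {x | t < u x}
      ≤ ENNReal.ofReal Mr + ENNReal.ofReal (Mr * Real.log (Lr / a)) + 0 := by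
        gcongr <;> first | exact hterm1 | exact hterm2 | exact le_of_eq hterm3
    _ = ENNReal.ofReal (Mr + Mr * Real.log (Lr / a)) := by
        rw [add_zero, ← ENNReal.ofReal_add hMrpos.le hlognn]
    _ = ENNReal.ofReal (Mr * (1 + Real.log (Lr / Mr * V))) := by
        rw [← hlog]; ring_nf
end
end

section
/- Let Ω ⊆ ℝ^N be open and let {φ_i}_{i∈I} ⊂ L^1(Ω) be a family bounded in L^1(Ω). Then {φ_i} is equi-integrable if and only if for every ε > 0 there exist a constant C_ε and a Borel set A_ε ⊂ Ω of finite Lebesgue measure such that every φ_i can be written φ_i = φ_i^1 + φ_i^2 with ‖φ_i^1‖_{L^1(Ω)} ≤ ε, spt(φ_i^2) ⊆ A_ε, and ‖φ_i^2‖_{L^2(Ω)} ≤ C_ε, for all i ∈ I. -/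
open MeasureTheory Set Metric Filter Topology ENNReal
open scoped FourierTransform RealInnerProductSpace

noncomputable section

/-- Equi-integrability of a family `{φ_i}` of functions on `Ω` (context definition):
(i) for every `ε > 0` there is a Borel `A ⊆ Ω` of finite measure with
`∫_{Ω∖A} |φ_i| ≤ ε` for all `i`; (ii) for every `ε > 0` there is `δ > 0` such that
`∫_E |φ_i| ≤ ε` for all `i`, for every Borel `E ⊆ Ω` with `𝓛^N(E) ≤ δ`. -/
def EquiIntegrableOn {N : ℕ} {ι : Type*} (Ω : Set (Euc N)) (φ : ι → Euc N → ℝ) : Prop :=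
  (∀ ε : ℝ, 0 < ε → ∃ A : Set (Euc N), MeasurableSet A ∧ A ⊆ Ω ∧ volume A < ⊤ ∧
    ∀ i, ∫ x in Ω \ A, |φ i x| ≤ ε) ∧
  (∀ ε : ℝ, 0 < ε → ∃ δ : ℝ, 0 < δ ∧ ∀ E : Set (Euc N), MeasurableSet E → E ⊆ Ω →
    volume E ≤ ENNReal.ofReal δ → ∀ i, ∫ x in E, |φ i x| ≤ ε)

/-- Characterization of equi-integrability: a family `{φ_i} ⊆ L¹(Ω)`
bounded in `L¹(Ω)` is equi-integrable iff for every `ε > 0` there are a constant `C_ε`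
and a Borel set `A_ε ⊆ Ω` of finite measure such that every `φ_i` decomposes as
`φ_i = φ_i¹ + φ_i²` with `‖φ_i¹‖_{L¹(Ω)} ≤ ε`, `spt φ_i² ⊆ A_ε` and `‖φ_i²‖_{L²(Ω)} ≤ C_ε`. -/
theorem statement9 {N : ℕ} {ι : Type*} (Ω : Set (Euc N)) (hΩ : IsOpen Ω)
    (φ : ι → Euc N → ℝ) (hint : ∀ i, IntegrableOn (φ i) Ω)
    (hbdd : ∃ M : ℝ, ∀ i, ∫ x in Ω, |φ i x| ≤ M) :
    EquiIntegrableOn Ω φ ↔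
      ∀ ε : ℝ, 0 < ε → ∃ (Cε : ℝ) (A : Set (Euc N)), MeasurableSet A ∧ A ⊆ Ω ∧
        volume A < ⊤ ∧
        ∀ i, ∃ φ1 φ2 : Euc N → ℝ,
          (∀ x, φ i x = φ1 x + φ2 x) ∧ IntegrableOn φ1 Ω ∧
          (∫ x in Ω, |φ1 x|) ≤ ε ∧ Function.support φ2 ⊆ A ∧
          eLpNorm φ2 2 (volume.restrict Ω) ≤ ENNReal.ofReal Cε := by
  obtain ⟨M, hM⟩ := hbdd
  constructor
  · rintro ⟨h1, h2⟩ ε hε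
    obtain ⟨A, hAm, hAΩ, hAfin, hA⟩ := h1 (ε / 2) (by positivity)
    obtain ⟨δ, hδ, hEδ⟩ := h2 (ε / 2) (by positivity)
    set K : ℝ := max M 0 / δ + 1 with hKdef
    have hKpos : 0 < K := by positivity
    refine ⟨(ENNReal.ofReal K * volume A ^ (1 / 2 : ℝ)).toReal, A, hAm, hAΩ, hAfin,
      fun i => ?_⟩
    obtain ⟨g, hgm, hgae⟩ := (hint i).aestronglyMeasurable
    set S : Set (Euc N) := A ∩ {x | |g x| ≤ K} with hSdef
    have hSm : MeasurableSet S :=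
      hAm.inter (measurableSet_le hgm.measurable.abs measurable_const)
    have hSA : S ⊆ A := inter_subset_left
    set φ2 : Euc N → ℝ := S.indicator (φ i) with hφ2def
    set φ1 : Euc N → ℝ := fun x => φ i x - φ2 x with hφ1def
    -- measure of A \ S is small (Chebyshev)
    have hASm : MeasurableSet (A \ S) := hAm.diff hSm
    have hASΩ : A \ S ⊆ Ω := fun x hx => hAΩ hx.1
    have hcheb : volume (A \ S) ≤ ENNReal.ofReal δ := by
      have hsub : A \ S ⊆ {x | ENNReal.ofReal K ≤ (‖g x‖₊ : ℝ≥0∞)} := by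
        intro x hx
        have hxK : K < |g x| := by
          by_contra hcon
          exact hx.2 ⟨hx.1, not_lt.mp hcon⟩
        have : ENNReal.ofReal K ≤ ENNReal.ofReal |g x| :=
          ENNReal.ofReal_le_ofReal hxK.le
        simpa [Real.enorm_eq_ofReal_abs] using this
      have hvol : volume (A \ S) = (volume.restrict Ω) (A \ S) := by
        rw [Measure.restrict_apply hASm, inter_eq_self_of_subset_left hASΩ]
      have hmono : (volume.restrict Ω) (A \ S) ≤
          (volume.restrict Ω) {x | ENNReal.ofReal K ≤ (‖g x‖₊ : ℝ≥0∞)} :=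
        measure_mono hsub
      have hcheb' : ENNReal.ofReal K *
          (volume.restrict Ω) {x | ENNReal.ofReal K ≤ (‖g x‖₊ : ℝ≥0∞)} ≤
          ∫⁻ x in Ω, (‖g x‖₊ : ℝ≥0∞) :=
        mul_meas_ge_le_lintegral₀ hgm.measurable.nnnorm.coe_nnreal_ennreal.aemeasurable _
      have hlg : ∫⁻ x in Ω, (‖g x‖₊ : ℝ≥0∞) = ENNReal.ofReal (∫ x in Ω, |φ i x|) := by
        have e1 : ∫⁻ x in Ω, (‖φ i x‖₊ : ℝ≥0∞) = ∫⁻ x in Ω, (‖g x‖₊ : ℝ≥0∞) :=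
          lintegral_congr_ae (hgae.mono fun x hx => by simp [hx])
        rw [← e1]; simp only [← enorm_eq_nnnorm]; rw [← ofReal_integral_norm_eq_lintegral_enorm (hint i)]
        simp [Real.norm_eq_abs]
      have hMK : ENNReal.ofReal (∫ x in Ω, |φ i x|) ≤ ENNReal.ofReal K * ENNReal.ofReal δ := by
        rw [← ENNReal.ofReal_mul hKpos.le]
        refine ENNReal.ofReal_le_ofReal ?_
        have h1 : ∫ x in Ω, |φ i x| ≤ max M 0 := le_max_of_le_left (hM i)
        have h2 : max M 0 ≤ K * δ := by
          rw [hKdef]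
          field_simp
          nlinarith [le_max_right M (0:ℝ)]
        linarith
      have hfin : ENNReal.ofReal K * volume (A \ S) ≤ ENNReal.ofReal K * ENNReal.ofReal δ := by
        calc ENNReal.ofReal K * volume (A \ S)
            ≤ ENNReal.ofReal K *
              (volume.restrict Ω) {x | ENNReal.ofReal K ≤ (‖g x‖₊ : ℝ≥0∞)} := by
              rw [hvol]; exact mul_le_mul_right hmono _
          _ ≤ ∫⁻ x in Ω, (‖g x‖₊ : ℝ≥0∞) := hcheb'
          _ ≤ ENNReal.ofReal K * ENNReal.ofReal δ := by rw [hlg]; exact hMK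
      exact (ENNReal.mul_le_mul_iff_right (by simp [hKpos]) ENNReal.ofReal_ne_top).mp hfin
    refine ⟨φ1, φ2, fun x => by simp [hφ1def], (hint i).sub ((hint i).indicator hSm), ?_, ?_, ?_⟩
    · -- L¹ bound on φ1
      have h1eq : ∀ x, |φ1 x| = Sᶜ.indicator (fun y => |φ i y|) x := by
        intro x
        by_cases hx : x ∈ S
        · simp [hφ1def, hφ2def, Set.indicator_of_mem hx, Set.indicator_of_notMem,
            (by simpa using hx : x ∉ Sᶜ)]
        · simp [hφ1def, hφ2def, Set.indicator_of_notMem hx,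
            Set.indicator_of_mem (by simpa using hx : x ∈ Sᶜ)]
      have hsplit : Sᶜ ∩ Ω = (Ω \ A) ∪ (A \ S) := by
        ext x
        simp only [mem_inter_iff, mem_compl_iff, mem_union, mem_diff]
        constructor
        · rintro ⟨hxS, hxΩ⟩
          by_cases hxA : x ∈ A
          · exact Or.inr ⟨hxA, hxS⟩
          · exact Or.inl ⟨hxΩ, hxA⟩
        · rintro (⟨hxΩ, hxA⟩ | ⟨hxA, hxS⟩)
          · exact ⟨fun hxS => hxA (hSA hxS), hxΩ⟩
          · exact ⟨hxS, hAΩ hxA⟩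
      have habs : IntegrableOn (fun x => |φ i x|) Ω volume := (hint i).abs
      have key : ∫ x in Ω, |φ1 x| = (∫ x in Ω \ A, |φ i x|) + ∫ x in A \ S, |φ i x| := by
        calc ∫ x in Ω, |φ1 x| = ∫ x in Ω, Sᶜ.indicator (fun y => |φ i y|) x :=
              integral_congr_ae (Eventually.of_forall h1eq)
          _ = ∫ x in Sᶜ, |φ i x| ∂(volume.restrict Ω) := integral_indicator hSm.compl
          _ = ∫ x in Sᶜ ∩ Ω, |φ i x| := by rw [Measure.restrict_restrict hSm.compl]
          _ = ∫ x in (Ω \ A) ∪ (A \ S), |φ i x| := by rw [hsplit]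
          _ = (∫ x in Ω \ A, |φ i x|) + ∫ x in A \ S, |φ i x| := by
              refine setIntegral_union ?_ hASm ?_ ?_
              · exact Disjoint.mono_right diff_subset disjoint_sdiff_self_left
              · exact habs.mono_set diff_subset
              · exact habs.mono_set hASΩ
      rw [key]
      have := hA i
      have := hEδ (A \ S) hASm hASΩ hcheb i
      linarith
    · exact (Set.support_indicator_subset).trans hSA
    · -- L² bound on φ2
      have h1 : eLpNorm φ2 2 (volume.restrict Ω) = eLpNorm (S.indicator g) 2 (volume.restrict Ω) :=
        eLpNorm_congr_ae (hgae.mono fun x hx => by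
          by_cases h : x ∈ S <;> simp [hφ2def, Set.indicator, h, hx])
      have h2 : eLpNorm (S.indicator g) 2 (volume.restrict Ω) ≤
          eLpNorm (A.indicator fun _ => K) 2 (volume.restrict Ω) := by
        refine eLpNorm_mono fun x => ?_
        by_cases hx : x ∈ S
        · rw [Set.indicator_of_mem hx, Set.indicator_of_mem (hSA hx)]
          simpa [Real.norm_eq_abs, abs_of_pos hKpos] using hx.2
        · rw [Set.indicator_of_notMem hx]
          simpa using norm_nonneg _
      have h3 : eLpNorm (A.indicator fun _ => K) 2 (volume.restrict Ω) =
          ENNReal.ofReal K * volume A ^ (1 / 2 : ℝ) := by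
        rw [eLpNorm_indicator_const hAm two_ne_zero ENNReal.ofNat_ne_top]
        rw [Measure.restrict_apply hAm, inter_eq_self_of_subset_left hAΩ]
        norm_num [Real.enorm_eq_ofReal hKpos.le]
      have hne : ENNReal.ofReal K * volume A ^ (1 / 2 : ℝ) ≠ ⊤ :=
        ENNReal.mul_ne_top ENNReal.ofReal_ne_top
          (ENNReal.rpow_ne_top_of_nonneg (by norm_num) hAfin.ne)
      rw [ENNReal.ofReal_toReal hne, h1]
      exact h2.trans_eq h3
  · intro h
    constructor
    · intro ε hε
      obtain ⟨Cε, A, hAm, hAΩ, hAfin, hdec⟩ := h ε hε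
      refine ⟨A, hAm, hAΩ, hAfin, fun i => ?_⟩
      obtain ⟨φ1, φ2, heq, hφ1int, hφ1, hsupp, -⟩ := hdec i
      have heqon : EqOn (fun x => |φ i x|) (fun x => |φ1 x|) (Ω \ A) := by
        intro x hx
        have hx2 : φ2 x = 0 := by
          by_contra hc
          exact hx.2 (hsupp hc)
        simp [heq x, hx2]
      calc ∫ x in Ω \ A, |φ i x| = ∫ x in Ω \ A, |φ1 x| :=
            setIntegral_congr_fun (hΩ.measurableSet.diff hAm) heqon
        _ ≤ ∫ x in Ω, |φ1 x| := by
            refine setIntegral_mono_set hφ1int.abs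
              (Eventually.of_forall fun x => abs_nonneg _) ?_
            exact HasSubset.Subset.eventuallyLE diff_subset
        _ ≤ ε := hφ1
    · intro ε hε
      obtain ⟨Cε, A, hAm, hAΩ, hAfin, hdec⟩ := h (ε / 2) (by positivity)
      set C' : ℝ := max Cε 0 with hC'def
      have hC' : 0 ≤ C' := le_max_right _ _
      set s : ℝ := ε / (2 * (C' + 1)) with hsdef
      have hs : 0 < s := by positivity
      refine ⟨s ^ 2, by positivity, fun E hEm hEΩ hEvol i => ?_⟩
      obtain ⟨φ1, φ2, heq, hφ1int, hφ1, hsupp, hφ2L2⟩ := hdec i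
      have hφ2eq : φ2 = fun x => φ i x - φ1 x := funext fun x => by linarith [heq x]
      have hφ2int : IntegrableOn φ2 Ω := by rw [hφ2eq]; exact (hint i).sub hφ1int
      have hφ1E : IntegrableOn φ1 E := hφ1int.mono_set hEΩ
      have hφ2E : IntegrableOn φ2 E := hφ2int.mono_set hEΩ
      have step1 : ∫ x in E, |φ i x| ≤ (∫ x in E, |φ1 x|) + ∫ x in E, |φ2 x| := by
        rw [← integral_add hφ1E.abs hφ2E.abs]
        have habs : IntegrableOn (fun x => |φ i x|) Ω volume := (hint i).abs
        refine integral_mono (habs.mono_set hEΩ) (hφ1E.abs.add hφ2E.abs) fun x => ?_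
        rw [heq x]; exact abs_add_le _ _
      have step2 : ∫ x in E, |φ1 x| ≤ ε / 2 := by
        refine le_trans ?_ hφ1
        refine setIntegral_mono_set hφ1int.abs
          (Eventually.of_forall fun x => abs_nonneg _) (HasSubset.Subset.eventuallyLE hEΩ)
      have step3 : ∫ x in E, |φ2 x| ≤ ε / 2 := by
        have hl2E : eLpNorm φ2 2 (volume.restrict E) ≤ ENNReal.ofReal Cε :=
          le_trans (eLpNorm_mono_measure φ2 (Measure.restrict_mono hEΩ le_rfl)) hφ2L2
        have hmeasE : (volume.restrict E) Set.univ ≤ ENNReal.ofReal (s ^ 2) := by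
          rw [Measure.restrict_apply_univ]; exact hEvol
        have haesm : AEStronglyMeasurable φ2 (volume.restrict E) :=
          hφ2E.aestronglyMeasurable
        have hholder : eLpNorm φ2 1 (volume.restrict E) ≤
            eLpNorm φ2 2 (volume.restrict E) *
              (volume.restrict E) Set.univ ^ (1 / (1:ℝ≥0∞).toReal - 1 / (2:ℝ≥0∞).toReal) :=
          eLpNorm_le_eLpNorm_mul_rpow_measure_univ one_le_two haesm
        have hexp : (1 / (1:ℝ≥0∞).toReal - 1 / (2:ℝ≥0∞).toReal) = (1/2 : ℝ) := by norm_num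
        have hofreal : ENNReal.ofReal (∫ x in E, |φ2 x|) = eLpNorm φ2 1 (volume.restrict E) := by
          rw [eLpNorm_one_eq_lintegral_enorm, ← ofReal_integral_norm_eq_lintegral_enorm hφ2E]
          simp [Real.norm_eq_abs]
        have hrhs : eLpNorm φ2 2 (volume.restrict E) *
            (volume.restrict E) Set.univ ^ (1/2 : ℝ) ≤ ENNReal.ofReal (C' * s) := by
          have h1 : (volume.restrict E) Set.univ ^ (1/2 : ℝ) ≤
              ENNReal.ofReal (s ^ 2) ^ (1/2 : ℝ) :=
            ENNReal.rpow_le_rpow hmeasE (by norm_num)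
          have h2 : ENNReal.ofReal (s ^ 2) ^ (1/2 : ℝ) = ENNReal.ofReal s := by
            rw [ENNReal.ofReal_rpow_of_nonneg (by positivity) (by norm_num : (0:ℝ) ≤ 1/2)]
            congr 1
            rw [← Real.rpow_natCast s 2, ← Real.rpow_mul hs.le]
            norm_num
          calc eLpNorm φ2 2 (volume.restrict E) * (volume.restrict E) Set.univ ^ (1/2 : ℝ)
              ≤ ENNReal.ofReal Cε * ENNReal.ofReal s := by
                refine mul_le_mul' hl2E ?_
                rw [← h2]; exact h1
            _ ≤ ENNReal.ofReal C' * ENNReal.ofReal s :=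
                mul_le_mul' (ENNReal.ofReal_le_ofReal (le_max_left _ _)) le_rfl
            _ = ENNReal.ofReal (C' * s) := (ENNReal.ofReal_mul hC').symm
        have hfinal : ENNReal.ofReal (∫ x in E, |φ2 x|) ≤ ENNReal.ofReal (C' * s) := by
          rw [hofreal]
          exact le_trans hholder (by rw [hexp]; exact hrhs)
        have hCs : C' * s ≤ ε / 2 := by
          have e : C' * s = (C' * ε) / (2 * (C' + 1)) := by rw [hsdef]; ring
          rw [e, div_le_div_iff₀ (by positivity) (by norm_num : (0:ℝ) < 2)]
          nlinarith
        have := (ENNReal.ofReal_le_ofReal_iff (by positivity)).mp hfinal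
        linarith
      linarith
end
end
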